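/- arXiv:math/9805095 — 3 statements merged into one kernel-verified Lean document; each statement's English description precedes it below -/
import Mathlib

section
/- Let δ and Δ be two anticommuting differentials on a k-vector space A (δ² = Δ² = 0, δΔ + Δδ = 0). Then the condition Im δΔ = Im Δδ = Im δ ∩ Ker Δ together with Im δΔ = Im Δδ = Im Δ ∩ Ker δ is equivalent to the single condition Im δΔ = Im Δδ = (Ker δ ∩ Ker Δ) ∩ (Im δ + Im Δ). -/
/- STATEMENT 4: For anticommuting differentials δ, Δ on a k-vector space A
(δ² = Δ² = 0, δΔ + Δδ = 0), the conditions (A) and (B):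
Im δΔ = Im Δδ = Im δ ∩ Ker Δ and Im δΔ = Im Δδ = Im Δ ∩ Ker δ
together are equivalent to the single condition (C):
Im δΔ = Im Δδ = (Ker δ ∩ Ker Δ) ∩ (Im δ + Im Δ). -/
theorem stmt4 {k A : Type*} [Field k] [AddCommGroup A] [Module k A]
    (δ Δ : A →ₗ[k] A)
    (hδ2 : δ ∘ₗ δ = 0) (hΔ2 : Δ ∘ₗ Δ = 0) (hanti : δ ∘ₗ Δ + Δ ∘ₗ δ = 0) :
    ((LinearMap.range (δ ∘ₗ Δ) = LinearMap.range (Δ ∘ₗ δ) ∧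
      LinearMap.range (δ ∘ₗ Δ) = LinearMap.range δ ⊓ LinearMap.ker Δ ∧
      LinearMap.range (δ ∘ₗ Δ) = LinearMap.range Δ ⊓ LinearMap.ker δ)
    ↔ (LinearMap.range (δ ∘ₗ Δ) = LinearMap.range (Δ ∘ₗ δ) ∧
       LinearMap.range (δ ∘ₗ Δ) =
         (LinearMap.ker δ ⊓ LinearMap.ker Δ) ⊓
           (LinearMap.range δ ⊔ LinearMap.range Δ))) := by
  have hδ : ∀ x, δ (δ x) = 0 := fun x => by
    have := LinearMap.congr_fun hδ2 x; simpa using this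
  have hΔ : ∀ x, Δ (Δ x) = 0 := fun x => by
    have := LinearMap.congr_fun hΔ2 x; simpa using this
  have ha : ∀ x, Δ (δ x) = -δ (Δ x) := fun x => by
    have := LinearMap.congr_fun hanti x
    simp only [LinearMap.add_apply, LinearMap.comp_apply, LinearMap.zero_apply] at this
    exact eq_neg_of_add_eq_zero_left (by rw [add_comm]; exact this)
  constructor
  · rintro ⟨h1, h2, h3⟩
    refine ⟨h1, le_antisymm ?_ ?_⟩
    · rintro _ ⟨x, rfl⟩
      refine Submodule.mem_inf.2 ⟨Submodule.mem_inf.2 ⟨?_, ?_⟩, ?_⟩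
      · simp [LinearMap.mem_ker, LinearMap.comp_apply, hδ]
      · simp only [LinearMap.mem_ker, LinearMap.comp_apply]
        show Δ (δ (Δ x)) = 0
        rw [ha, hΔ, map_zero, neg_zero]
      · exact Submodule.mem_sup_left ⟨Δ x, rfl⟩
    · intro y hy
      obtain ⟨⟨hyδ, hyΔ⟩, hysup⟩ := Submodule.mem_inf.1 hy
      obtain ⟨u, hu, v, hv, rfl⟩ := Submodule.mem_sup.1 hysup
      obtain ⟨a, rfl⟩ := hu
      obtain ⟨b, rfl⟩ := hv
      have hΔu : Δ (δ a) = 0 := by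
        have : Δ (δ a + Δ b) = 0 := hyΔ
        rw [map_add, hΔ, add_zero] at this
        exact this
      have hδv : δ (Δ b) = 0 := by
        have : δ (δ a + Δ b) = 0 := hyδ
        rw [map_add, hδ, zero_add] at this
        exact this
      have hmem1 : δ a ∈ LinearMap.range (δ ∘ₗ Δ) := by
        rw [h2]; exact ⟨⟨a, rfl⟩, hΔu⟩
      have hmem2 : Δ b ∈ LinearMap.range (δ ∘ₗ Δ) := by
        rw [h3]; exact ⟨⟨b, rfl⟩, hδv⟩
      exact Submodule.add_mem _ hmem1 hmem2
  · rintro ⟨h1, h2⟩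
    refine ⟨h1, le_antisymm ?_ ?_, le_antisymm ?_ ?_⟩
    · rintro _ ⟨x, rfl⟩
      refine ⟨⟨Δ x, rfl⟩, ?_⟩
      simp only [LinearMap.mem_ker, LinearMap.comp_apply]
      show Δ (δ (Δ x)) = 0
      rw [ha, hΔ, map_zero, neg_zero]
    · rintro y ⟨⟨a, rfl⟩, hk⟩
      rw [h2]
      exact ⟨⟨hδ a, hk⟩, Submodule.mem_sup_left ⟨a, rfl⟩⟩
    · intro y hy
      rw [h1] at hy
      obtain ⟨x, rfl⟩ := hy
      refine ⟨⟨δ x, rfl⟩, ?_⟩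
      simp only [LinearMap.mem_ker, LinearMap.comp_apply]
      show δ (Δ (δ x)) = 0
      rw [ha, map_neg, hδ, neg_zero]
    · rintro y ⟨⟨b, rfl⟩, hk⟩
      rw [h2]
      exact ⟨⟨hk, hΔ b⟩, Submodule.mem_sup_right ⟨b, rfl⟩⟩
end

section
/- Let δ and Δ be anticommuting differentials on a vector space A satisfying Im δΔ = Im δ ∩ Ker Δ and Im δΔ = Im Δ ∩ Ker δ. Then the natural maps give isomorphisms H(A, δ) ≅ H(A, Δ) ≅ (Ker δ ∩ Ker Δ)/Im δΔ. -/
/- STATEMENT 5: For anticommuting differentials δ, Δ on a k-vector space A with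
Im δΔ = Im δ ∩ Ker Δ and Im δΔ = Im Δ ∩ Ker δ, the natural maps (induced by the
inclusions of Ker δ ∩ Ker Δ into Ker δ and Ker Δ) give isomorphisms
H(A, δ) ≅ (Ker δ ∩ Ker Δ)/Im δΔ ≅ H(A, Δ).
The four conclusions below say precisely that the natural map
(Ker δ ∩ Ker Δ)/Im δΔ → H(A, δ) = Ker δ/Im δ is surjective and injective,
and likewise for (Ker δ ∩ Ker Δ)/Im δΔ → H(A, Δ) = Ker Δ/Im Δ. -/
theorem stmt5 {k A : Type*} [Field k] [AddCommGroup A] [Module k A]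
    (δ Δ : A →ₗ[k] A)
    (hδ2 : ∀ x, δ (δ x) = 0) (hΔ2 : ∀ x, Δ (Δ x) = 0)
    (hanti : ∀ x, δ (Δ x) + Δ (δ x) = 0)
    (hA : LinearMap.range (δ ∘ₗ Δ) = LinearMap.range δ ⊓ LinearMap.ker Δ)
    (hB : LinearMap.range (δ ∘ₗ Δ) = LinearMap.range Δ ⊓ LinearMap.ker δ) :
    -- surjectivity onto H(A, δ): every δ-class has a representative in Ker δ ∩ Ker Δ
    (∀ x : A, δ x = 0 → ∃ y u, δ y = 0 ∧ Δ y = 0 ∧ x = y + δ u) ∧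
    -- injectivity into H(A, δ): kernel of the map to H(A, δ) is Im δΔ
    (∀ y : A, δ y = 0 → Δ y = 0 → (∃ u, y = δ u) → ∃ v, y = δ (Δ v)) ∧
    -- surjectivity onto H(A, Δ)
    (∀ x : A, Δ x = 0 → ∃ y u, δ y = 0 ∧ Δ y = 0 ∧ x = y + Δ u) ∧
    -- injectivity into H(A, Δ)
    (∀ y : A, δ y = 0 → Δ y = 0 → (∃ u, y = Δ u) → ∃ v, y = δ (Δ v)) := by

  refine ⟨?_, ?_, ?_, ?_⟩
  · -- surjectivity onto H(A, δ)
    intro x hx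
    have hmem : Δ x ∈ LinearMap.range (δ ∘ₗ Δ) := by
      rw [hB, Submodule.mem_inf]
      refine ⟨⟨x, rfl⟩, ?_⟩
      have := hanti x
      simp only [LinearMap.mem_ker]
      rw [hx] at this
      simpa using this
    obtain ⟨v, hv⟩ := hmem
    simp only [LinearMap.comp_apply] at hv
    refine ⟨x + δ v, -v, ?_, ?_, by simp⟩
    · simp [hx, hδ2]
    · rw [map_add, ← hv]
      exact hanti v
  · intro y hy hΔy ⟨u, hu⟩
    have hmem : y ∈ LinearMap.range (δ ∘ₗ Δ) := by
      rw [hA, Submodule.mem_inf]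
      exact ⟨⟨u, hu.symm⟩, hΔy⟩
    obtain ⟨v, hv⟩ := hmem
    exact ⟨v, hv.symm⟩
  · intro x hx
    have hmem : δ x ∈ LinearMap.range (δ ∘ₗ Δ) := by
      rw [hA, Submodule.mem_inf]
      refine ⟨⟨x, rfl⟩, ?_⟩
      have := hanti x
      simp only [LinearMap.mem_ker]
      rw [hx] at this
      simpa using this
    obtain ⟨v, hv⟩ := hmem
    simp only [LinearMap.comp_apply] at hv
    refine ⟨x - Δ v, v, ?_, ?_, by abel⟩
    · simp [map_sub, ← hv]
    · simp [hx, map_sub, hΔ2]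
  · intro y hy hΔy ⟨u, hu⟩
    have hmem : y ∈ LinearMap.range (δ ∘ₗ Δ) := by
      rw [hB, Submodule.mem_inf]
      exact ⟨⟨u, hu.symm⟩, hy⟩
    obtain ⟨v, hv⟩ := hmem
    exact ⟨v, hv.symm⟩
end

section
/- Let X be a compact Kähler manifold and Δ = [Λ, d] the operator on complex differential forms, where Λ is the adjoint of the Lefschetz operator L. Then the inclusion i: (Ker Δ, d) ↪ (Ω(X), d) induces an isomorphism on cohomology. In particular: (a) every de Rham class has a representative in Ker d ∩ Ker Δ, and (b) if α ∈ Ker Δ is d-exact then α = dβ for some β ∈ Ker Δ. -/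
open scoped ComplexInnerProductSpace

/- STATEMENT 12: On a compact Kähler manifold X with Δ = [Λ, d], the inclusion
i : (Ker Δ, d) ↪ (Ω(X), d) induces an isomorphism on cohomology; in particular
(a) every de Rham class has a representative in Ker d ∩ Ker Δ, and
(b) if α ∈ Ker Δ is d-exact, then α = dβ for some β ∈ Ker Δ.
The Hodge-theoretic package used in the proof is axiomatized: A is the (pre-Hilbert)
space of complex forms with the L² inner product, d the exterior derivative,
ds = d* and Δs = Δ* formal adjoints, □ = dd* + d*d; the Kähler identity
□ = □_Δ := ΔΔ* + Δ*Δ, the anticommutation relations Δd + dΔ = 0 and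
Δd* + d*Δ = 0, and the Hodge decomposition (every form is harmonic plus □β). -/

open scoped ComplexInnerProductSpace

lemma aux_sum_sq {A : Type*} [NormedAddCommGroup A] [InnerProductSpace ℂ A]
    {a b : A} (h : ⟪a, a⟫ + ⟪b, b⟫ = (0 : ℂ)) : a = 0 ∧ b = 0 := by
  rw [inner_self_eq_norm_sq_to_K, inner_self_eq_norm_sq_to_K] at h
  have h' : (‖a‖ : ℝ) ^ 2 + ‖b‖ ^ 2 = 0 := by exact_mod_cast (Complex.ofReal_eq_zero.mp (by push_cast at h ⊢; exact h))
  have ha : ‖a‖ = 0 := by nlinarith [sq_nonneg ‖a‖, sq_nonneg ‖b‖]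
  have hb : ‖b‖ = 0 := by nlinarith [sq_nonneg ‖a‖, sq_nonneg ‖b‖]
  exact ⟨norm_eq_zero.mp ha, norm_eq_zero.mp hb⟩

lemma aux_harm {A : Type*} [NormedAddCommGroup A] [InnerProductSpace ℂ A]
    (d ds : A →ₗ[ℂ] A) (hadj : ∀ x y : A, ⟪d x, y⟫ = ⟪x, ds y⟫)
    {h : A} (hh : d (ds h) + ds (d h) = 0) : d h = 0 ∧ ds h = 0 := by
  have e1 : ⟪d (ds h), h⟫ = ⟪ds h, ds h⟫ := hadj _ _
  have e2 : ⟪ds (d h), h⟫ = ⟪d h, d h⟫ := by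
    rw [← inner_conj_symm, ← hadj, inner_conj_symm]
  have h0 : ⟪ds h, ds h⟫ + ⟪d h, d h⟫ = (0 : ℂ) := by
    rw [← e1, ← e2, ← inner_add_left, hh, inner_zero_left]
  obtain ⟨h1, h2⟩ := aux_sum_sq h0
  exact ⟨h2, h1⟩

theorem stmt12 {A : Type*} [NormedAddCommGroup A] [InnerProductSpace ℂ A]
    (d ds Δ Δs : A →ₗ[ℂ] A)
    (hd2 : ∀ x, d (d x) = 0)
    (hadj_d : ∀ x y : A, ⟪d x, y⟫ = ⟪x, ds y⟫)
    (hadj_Δ : ∀ x y : A, ⟪Δ x, y⟫ = ⟪x, Δs y⟫)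
    -- □ = □_Δ:
    (hlap : ∀ x, d (ds x) + ds (d x) = Δ (Δs x) + Δs (Δ x))
    (hΔd : ∀ x, Δ (d x) + d (Δ x) = 0)
    (hΔds : ∀ x, Δ (ds x) + ds (Δ x) = 0)
    -- Hodge decomposition Ω(X) = H ⊕ Im □:
    (hodge : ∀ α : A, ∃ h β, (d (ds h) + ds (d h) = 0) ∧
      α = h + (d (ds β) + ds (d β))) :
    -- (a): surjectivity of H(i); every de Rham class has a rep in Ker d ∩ Ker Δ
    (∀ α : A, d α = 0 → ∃ h β, d h = 0 ∧ Δ h = 0 ∧ α = h + d β) ∧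
    -- (b): injectivity of H(i); a d-exact element of Ker Δ is d of an element of Ker Δ
    (∀ α : A, Δ α = 0 → (∃ β, α = d β) → ∃ β, Δ β = 0 ∧ α = d β) := by
  -- key: from the Hodge decomposition of a closed form, extract the data
  have key : ∀ α : A, d α = 0 → ∃ h β, (d h = 0 ∧ ds h = 0 ∧ Δ h = 0) ∧
      α = h + d (ds β) := by
    intro α hdα
    obtain ⟨h, β, hh, hdec⟩ := hodge α
    obtain ⟨hdh, hdsh⟩ := aux_harm d ds hadj_d hh
    have hΔh : Δ h = 0 := by
      have hh' : Δ (Δs h) + Δs (Δ h) = 0 := by rw [← hlap, hh]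
      exact (aux_harm Δ Δs hadj_Δ hh').1
    -- kill the ds d β term
    have h1 : d (ds (d β)) = 0 := by
      have e : d α = d h + (d (d (ds β)) + d (ds (d β))) := by
        rw [hdec, map_add, map_add]
      rw [hdα, hdh, hd2] at e
      simpa using e.symm
    have h2 : ds (d β) = 0 := by
      have : ⟪ds (d β), ds (d β)⟫ = (0 : ℂ) := by
        rw [← hadj_d, h1, inner_zero_left]
      exact inner_self_eq_zero.mp this
    exact ⟨h, β, ⟨hdh, hdsh, hΔh⟩, by rw [hdec, h2, add_zero]⟩
  constructor
  · intro α hdα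
    obtain ⟨h, β, ⟨hdh, _, hΔh⟩, hdec⟩ := key α hdα
    exact ⟨h, ds β, hdh, hΔh, hdec⟩
  · intro α hΔα ⟨γ, hγ⟩
    have hdα : d α = 0 := by rw [hγ, hd2]
    obtain ⟨h, β, ⟨hdh, hdsh, hΔh⟩, hdec⟩ := key α hdα
    -- h = 0 since α is exact
    have hh0 : h = 0 := by
      have e1 : ⟪α, h⟫ = (0 : ℂ) := by
        rw [hγ, hadj_d, hdsh, inner_zero_right]
      have e2 : ⟪α, h⟫ = ⟪h, h⟫ := by
        rw [hdec, inner_add_left, hadj_d, hdsh, inner_zero_right, add_zero]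
      exact inner_self_eq_zero.mp (e2.symm.trans e1)
    have hαd : α = d (ds β) := by rw [hdec, hh0, zero_add]
    -- Δ (ds β) = 0
    have h3 : d (ds (Δ β)) = 0 := by
      have e : Δ (d (ds β)) + d (Δ (ds β)) = 0 := hΔd (ds β)
      have e2 : Δ (ds β) + ds (Δ β) = 0 := hΔds β
      have eΔβ : Δ (ds β) = - ds (Δ β) := eq_neg_of_add_eq_zero_left e2
      have : Δ α = - d (Δ (ds β)) := by rw [hαd]; exact eq_neg_of_add_eq_zero_left e
      rw [hΔα, eΔβ, map_neg, neg_neg] at this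
      exact this.symm
    have h4 : ds (Δ β) = 0 := by
      have : ⟪ds (Δ β), ds (Δ β)⟫ = (0 : ℂ) := by
        rw [← hadj_d, h3, inner_zero_left]
      exact inner_self_eq_zero.mp this
    have h5 : Δ (ds β) = 0 := by
      have := hΔds β; rw [h4, add_zero] at this; exact this
    exact ⟨ds β, h5, hαd⟩
end
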